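/- Weak maximum principle for functions of grade at least 1: let f : ℝⁿ → ℝ (n ≥ 1) be twice continuously differentiable, let Q ⊆ ℝⁿ be open, and suppose that for every x ∈ Q there exists a nonzero vector h ∈ ℝⁿ with ⟨∇²f(x)h, h⟩ ≥ 0 (i.e., f is non-convex of grade 1 on Q). Then for every nonempty compact set K ⊆ Q, the maximum of f over K is attained on the topological boundary of K: max_{x ∈ K} f(x) = max_{x ∈ ∂K} f(x). -/

import Mathlib

open scoped RealInnerProductSpace
open Real Set

/-- Second-derivative test: if the second derivative at `0` is positive, `0` is not a
local maximum. -/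
lemma aux_not_isLocalMax {φ : ℝ → ℝ} (hφ : ContDiff ℝ 2 φ)
    (hpos : 0 < deriv (deriv φ) 0) : ¬ IsLocalMax φ 0 := by
  intro hmax
  have h1 : deriv φ 0 = 0 := hmax.deriv_eq_zero
  have hφ1 : ContDiff ℝ 1 (deriv φ) := by
    have := (contDiff_succ_iff_deriv (n := 1)).mp (by exact_mod_cast hφ)
    exact this.2.2
  have hc2 : Continuous (deriv (deriv φ)) := hφ1.continuous_deriv le_rfl
  have hev : ∀ᶠ t in nhds (0 : ℝ), 0 < deriv (deriv φ) t :=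
    hc2.continuousAt.eventually (eventually_gt_nhds hpos)
  obtain ⟨δ, hδ, hball⟩ := Metric.eventually_nhds_iff_ball.mp hev
  have hmono : StrictMonoOn (deriv φ) (Icc 0 (δ / 2)) := by
    apply strictMonoOn_of_deriv_pos (convex_Icc _ _) (hφ1.continuous.continuousOn)
    intro t ht
    rw [interior_Icc] at ht
    apply hball
    rw [Metric.mem_ball, Real.dist_eq, sub_zero, abs_of_pos ht.1]
    linarith [ht.2]
  have hd2 : 0 < δ / 2 := by linarith
  have hderivpos : ∀ t ∈ Ioo (0 : ℝ) (δ / 2), 0 < deriv φ t := by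
    intro t ht
    have := hmono ⟨le_rfl, hd2.le⟩ ⟨ht.1.le, ht.2.le⟩ ht.1
    rwa [h1] at this
  have hφmono : StrictMonoOn φ (Icc 0 (δ / 2)) := by
    apply strictMonoOn_of_deriv_pos (convex_Icc _ _) (hφ.continuous.continuousOn)
    intro t ht
    rw [interior_Icc] at ht
    exact hderivpos t ht
  obtain ⟨η, hη, hball'⟩ := Metric.eventually_nhds_iff_ball.mp hmax
  set t0 : ℝ := min (δ / 2) η / 2 with ht0
  have ht0pos : 0 < t0 := by positivity
  have ht0δ : t0 ≤ δ / 2 := by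
    have := min_le_left (δ / 2) η
    linarith
  have ht0η : t0 < η := by
    have := min_le_right (δ / 2) η
    linarith
  have h2 : φ 0 < φ t0 := hφmono ⟨le_rfl, hd2.le⟩ ⟨ht0pos.le, ht0δ⟩ ht0pos
  have h3 : φ t0 ≤ φ 0 := by
    apply hball'
    rw [Metric.mem_ball, Real.dist_eq, sub_zero, abs_of_pos ht0pos]
    exact ht0η
  linarith

/-- Weak maximum principle for functions that are non-convex of grade at least 1:
if at every point of an open set `Q` there is a nonzero direction in which the Hessian
quadratic form is nonnegative, then for every nonempty compact `K ⊆ Q` the maximum of `f`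
over `K` is attained on the topological boundary (frontier) of `K`. -/
theorem weak_maximum_principle {n : ℕ} (hn : 1 ≤ n)
    (f : EuclideanSpace ℝ (Fin n) → ℝ) (hf : ContDiff ℝ 2 f)
    (Q : Set (EuclideanSpace ℝ (Fin n))) (hQ : IsOpen Q)
    (hgrade : ∀ x ∈ Q, ∃ h : EuclideanSpace ℝ (Fin n),
      h ≠ 0 ∧ 0 ≤ iteratedFDeriv ℝ 2 f x ![h, h])
    (K : Set (EuclideanSpace ℝ (Fin n))) (hK : IsCompact K) (hKne : K.Nonempty)
    (hKQ : K ⊆ Q) :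
    sSup (f '' K) = sSup (f '' frontier K) := by
  haveI : Nonempty (Fin n) := ⟨⟨0, hn⟩⟩
  haveI : Nontrivial (EuclideanSpace ℝ (Fin n)) := by
    refine ⟨0, EuclideanSpace.single ⟨0, hn⟩ 1, fun hc ↦ ?_⟩
    have := congrArg (fun v : EuclideanSpace ℝ (Fin n) => v ⟨0, hn⟩) hc
    rw [EuclideanSpace.single_apply] at this
    simp at this
  have hKcl : IsClosed K := hK.isClosed
  have hfrK : frontier K ⊆ K := hKcl.frontier_subset
  -- the frontier is nonempty
  have hfr : (frontier K).Nonempty := by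
    rw [nonempty_iff_ne_empty]
    intro hfe
    have hcl : IsClopen K := isClopen_iff_frontier_eq_empty.mpr hfe
    rcases isClopen_iff.mp hcl with h | h
    · exact hKne.ne_empty h
    · have : IsCompact (univ : Set (EuclideanSpace ℝ (Fin n))) := h ▸ hK
      exact noncompact_univ (EuclideanSpace ℝ (Fin n)) this
  have hfc : Continuous f := hf.continuous
  have hbdd : BddAbove (f '' K) := (hK.image hfc).bddAbove
  have hbddfr : BddAbove (f '' frontier K) := hbdd.mono (image_mono (f := f) hfrK)
  obtain ⟨R, hR⟩ := isBounded_iff_forall_norm_le.mp hK.isBounded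
  have hR0 : 0 ≤ R := le_trans (norm_nonneg _) (hR _ hKne.choose_spec)
  set M' := sSup (f '' frontier K) with hM'
  -- key : for every ε > 0 the sup over K is at most M' + ε * R ^ 2
  have key : ∀ ε : ℝ, 0 < ε → sSup (f '' K) ≤ M' + ε * R ^ 2 := by
    intro ε hε
    set g : EuclideanSpace ℝ (Fin n) → ℝ := fun x => f x + ε * ‖x‖ ^ 2 with hg
    have hgC : ContDiff ℝ 2 g := hf.add (contDiff_const.mul (contDiff_norm_sq ℝ))
    obtain ⟨x₀, hx₀K, hmaxg⟩ := hK.exists_isMaxOn hKne hgC.continuous.continuousOn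
    -- the maximizer of g is on the frontier
    have hx₀fr : x₀ ∈ frontier K := by
      by_contra hc
      have hint : x₀ ∈ interior K := by
        rw [hKcl.frontier_eq] at hc
        simp only [mem_diff, not_and, not_not] at hc
        exact hc hx₀K
      have hlm : IsLocalMax g x₀ := hmaxg.isLocalMax (mem_interior_iff_mem_nhds.mp hint)
      obtain ⟨h, hh0, hhess⟩ := hgrade x₀ (hKQ hx₀K)
      set L : ℝ → EuclideanSpace ℝ (Fin n) := fun t => x₀ + t • h with hL
      have hLd : ∀ t : ℝ, HasDerivAt L h t := by
        intro t
        have := ((hasDerivAt_id t).smul_const h).const_add x₀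
        rw [one_smul] at this
        exact this
      have hLc : Continuous L := by continuity
      have hL0 : L 0 = x₀ := by simp [hL]
      set φ : ℝ → ℝ := fun t => g (L t) with hφdef
      have hφC : ContDiff ℝ 2 φ := by
        apply hgC.comp
        exact contDiff_const.add (contDiff_id.smul contDiff_const)
      -- local max of φ at 0
      have hφmax : IsLocalMax φ 0 := by
        have := hLc.continuousAt (x := (0 : ℝ))
        rw [ContinuousAt, hL0] at this
        exact (this.eventually hlm).mono fun t ht => by simpa [hφdef, hL0] using ht
      -- compute the first derivative of φ
      have hdf : Differentiable ℝ f := hf.differentiable two_ne_zero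
      have hf' : ContDiff ℝ 1 (fderiv ℝ f) := hf.fderiv_right (by norm_num)
      have hψd : ∀ t : ℝ, HasDerivAt (fun s => f (L s))
          (fderiv ℝ f (L t) h) t := fun t => ((hdf (L t)).hasFDerivAt).comp_hasDerivAt t (hLd t)
      have hqd : ∀ t : ℝ, HasDerivAt (fun s => ε * ‖L s‖ ^ 2)
          (ε * (2 * ⟪x₀, h⟫ + 2 * t * ‖h‖ ^ 2)) t := by
        intro t
        have hexp : ∀ s : ℝ, ε * ‖L s‖ ^ 2
            = ε * (‖x₀‖ ^ 2 + 2 * s * ⟪x₀, h⟫ + s ^ 2 * ‖h‖ ^ 2) := by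
          intro s
          have := norm_add_sq_real x₀ (s • h)
          rw [hL]
          simp only
          rw [this, real_inner_smul_right, norm_smul, mul_pow, Real.norm_eq_abs, sq_abs]
          ring
        simp only [hexp]
        have h1 : HasDerivAt (fun s : ℝ => ‖x₀‖ ^ 2 + 2 * s * ⟪x₀, h⟫ + s ^ 2 * ‖h‖ ^ 2)
            (2 * ⟪x₀, h⟫ + 2 * t * ‖h‖ ^ 2) t := by
          have hp : HasDerivAt (fun s : ℝ => s ^ 2) (2 * t) t := by
            simpa using hasDerivAt_pow 2 t
          have := (((hasDerivAt_id t).const_mul 2).mul_const ⟪x₀, h⟫).const_add (‖x₀‖ ^ 2)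
          have h2 := this.add (hp.mul_const (‖h‖ ^ 2))
          rw [show (2 * ⟪x₀, h⟫ + 2 * t * ‖h‖ ^ 2) = 2 * 1 * ⟪x₀, h⟫ + 2 * t * ‖h‖ ^ 2 by ring]
          exact h2
        exact h1.const_mul ε
      have hφd : ∀ t : ℝ, HasDerivAt φ
          (fderiv ℝ f (L t) h + ε * (2 * ⟪x₀, h⟫ + 2 * t * ‖h‖ ^ 2)) t := by
        intro t
        exact (hψd t).add (hqd t)
      have hderivφ : deriv φ = fun t =>
          fderiv ℝ f (L t) h + ε * (2 * ⟪x₀, h⟫ + 2 * t * ‖h‖ ^ 2) :=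
        funext fun t => (hφd t).deriv
      -- compute the second derivative of φ at 0
      have hdd1 : HasDerivAt (fun t => fderiv ℝ f (L t) h)
          (fderiv ℝ (fderiv ℝ f) x₀ h h) 0 := by
        have hdf' : HasFDerivAt (fderiv ℝ f) (fderiv ℝ (fderiv ℝ f) x₀) x₀ :=
          ((hf'.differentiable one_ne_zero) x₀).hasFDerivAt
        have hdf'' : HasFDerivAt (fderiv ℝ f) (fderiv ℝ (fderiv ℝ f) x₀) (L 0) := by
          rw [hL0]; exact hdf'
        have h1 : HasDerivAt (fun t => fderiv ℝ f (L t))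
            (fderiv ℝ (fderiv ℝ f) x₀ h) 0 := hdf''.comp_hasDerivAt 0 (hLd 0)
        have h2 := h1.clm_apply (hasDerivAt_const (0 : ℝ) h)
        simpa using h2
      have hdd2 : HasDerivAt (fun t : ℝ => ε * (2 * ⟪x₀, h⟫ + 2 * t * ‖h‖ ^ 2))
          (ε * (2 * ‖h‖ ^ 2)) 0 := by
        have h1 : HasDerivAt (fun t : ℝ => 2 * ⟪x₀, h⟫ + 2 * t * ‖h‖ ^ 2)
            (2 * ‖h‖ ^ 2) 0 := by
          have := (((hasDerivAt_id (0 : ℝ)).const_mul 2).mul_const (‖h‖ ^ 2)).const_add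
            (2 * ⟪x₀, h⟫)
          simpa using this
        exact h1.const_mul ε
      have hdd : deriv (deriv φ) 0 = fderiv ℝ (fderiv ℝ f) x₀ h h + ε * (2 * ‖h‖ ^ 2) := by
        rw [hderivφ]
        exact (hdd1.add hdd2).deriv
      have hhess' : 0 ≤ fderiv ℝ (fderiv ℝ f) x₀ h h := by
        rwa [iteratedFDeriv_two_apply] at hhess
      have hpos : 0 < deriv (deriv φ) 0 := by
        rw [hdd]
        have hh : 0 < ‖h‖ := norm_pos_iff.mpr hh0
        have h2 : 0 < ‖h‖ ^ 2 := pow_pos hh 2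
        have h3 : 0 < ε * (2 * ‖h‖ ^ 2) := by nlinarith
        linarith
      exact aux_not_isLocalMax hφC hpos hφmax
    -- now conclude the bound
    apply csSup_le (hKne.image f)
    rintro y ⟨x, hxK, rfl⟩
    have h0 : 0 ≤ ε * ‖x‖ ^ 2 := by positivity
    have h2 : g x ≤ g x₀ := hmaxg hxK
    have h3 : f x₀ ≤ M' := le_csSup hbddfr (mem_image_of_mem f hx₀fr)
    have h4 : ‖x₀‖ ^ 2 ≤ R ^ 2 := by
      have := hR x₀ (hfrK hx₀fr)
      nlinarith [norm_nonneg x₀]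
    have h5 : ε * ‖x₀‖ ^ 2 ≤ ε * R ^ 2 := by nlinarith
    simp only [hg] at h2
    linarith
  -- combine the two directions
  have hle : sSup (f '' K) ≤ M' := by
    by_contra hc
    push_neg at hc
    set δ := sSup (f '' K) - M' with hδ
    have hδpos : 0 < δ := by simp [hδ]; linarith
    have hεpos : 0 < δ / (2 * (R ^ 2 + 1)) := by positivity
    have := key _ hεpos
    have hfrac : δ / (2 * (R ^ 2 + 1)) * R ^ 2 < δ := by
      rw [div_mul_eq_mul_div, div_lt_iff₀ (by positivity)]
      nlinarith
    simp only [hδ] at hfrac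
    linarith
  have hge : M' ≤ sSup (f '' K) :=
    csSup_le_csSup hbdd (hfr.image f) (image_mono (f := f) hfrK)
  linarith
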